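/- Let S be a numerical semigroup with critical element k and f an automorphism of P(S). Then for every singleton {r} with r ∈ S, f({r}) = {r}. -/

import Mathlib

open Pointwise

/-- The power semigroup `P(S)`: finite nonempty subsets of `S`. -/
def PS (S : Set ℕ) : Set (Finset ℕ) := {X | X.Nonempty ∧ (X : Set ℕ) ⊆ S}

/-- `f` is an automorphism of the power semigroup `P(S)`:
an additive bijection of `P(S)` (setwise addition). -/
def IsPowerAut (S : Set ℕ) (f : Finset ℕ → Finset ℕ) : Prop :=
  (∀ X ∈ PS S, f X ∈ PS S) ∧
  (∀ X ∈ PS S, ∀ Y ∈ PS S, f X = f Y → X = Y) ∧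
  (∀ Y ∈ PS S, ∃ X ∈ PS S, f X = Y) ∧
  (∀ X ∈ PS S, ∀ Y ∈ PS S, f (X + Y) = f X + f Y)

/-- `S` is a numerical semigroup: a subsemigroup of `(ℕ, +)` with finite complement. -/
def IsNumSgp (S : Set ℕ) : Prop :=
  (∀ a ∈ S, ∀ b ∈ S, a + b ∈ S) ∧ (Sᶜ).Finite

/-- `k` is the critical element of `S`: the least `k` with `[k, ∞) ⊆ S`. -/
def IsCritical (S : Set ℕ) (k : ℕ) : Prop :=
  (∀ n, k ≤ n → n ∈ S) ∧ ∀ j, (∀ n, j ≤ n → n ∈ S) → k ≤ j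

namespace Stmt16Aux

lemma singleton_mem_PS {S : Set ℕ} {a : ℕ} (ha : a ∈ S) : ({a} : Finset ℕ) ∈ PS S :=
  ⟨Finset.singleton_nonempty a, by simpa using ha⟩

lemma add_mem_PS {S : Set ℕ} (hcl : ∀ a ∈ S, ∀ b ∈ S, a + b ∈ S)
    {X Y : Finset ℕ} (hX : X ∈ PS S) (hY : Y ∈ PS S) : X + Y ∈ PS S := by
  refine ⟨hX.1.add hY.1, ?_⟩
  intro x hx
  rw [Finset.mem_coe, Finset.mem_add] at hx
  obtain ⟨y, hy, z, hz, rfl⟩ := hx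
  exact hcl y (hX.2 hy) z (hY.2 hz)

/-- Key combinatorial identity: removing `b₀ + b₁` from `B + B` does not change `B + (B+B)`. -/
lemma erase_add (B : Finset ℕ) {b₀ b₁ : ℕ} (h0 : b₀ ∈ B) (h1 : b₁ ∈ B) (hne : b₀ ≠ b₁) :
    B + (B + B).erase (b₀ + b₁) = B + (B + B) := by
  apply Finset.Subset.antisymm
  · exact Finset.add_subset_add_left (Finset.erase_subset _ _)
  · intro x hx
    rw [Finset.mem_add] at hx
    obtain ⟨p, hp, q, hq, hpq⟩ := hx
    by_cases hq' : q = b₀ + b₁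
    · by_cases hp' : p = b₀
      · have hmem : b₀ + b₀ ∈ (B + B).erase (b₀ + b₁) :=
          Finset.mem_erase.2 ⟨by omega, Finset.mem_add.2 ⟨b₀, h0, b₀, h0, rfl⟩⟩
        exact Finset.mem_add.2 ⟨b₁, h1, b₀ + b₀, hmem, by omega⟩
      · have hmem : p + b₁ ∈ (B + B).erase (b₀ + b₁) :=
          Finset.mem_erase.2 ⟨by omega, Finset.mem_add.2 ⟨p, hp, b₁, h1, rfl⟩⟩
        exact Finset.mem_add.2 ⟨b₀, h0, p + b₁, hmem, by omega⟩
    · exact Finset.mem_add.2 ⟨p, hp, q, Finset.mem_erase.2 ⟨hq', hq⟩, hpq⟩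

/-- Cancellation of a singleton summand. -/
lemma singleton_add_cancel {a : ℕ} {X Y : Finset ℕ}
    (h : ({a} : Finset ℕ) + X = ({a} : Finset ℕ) + Y) : X = Y := by
  ext x
  constructor
  · intro hx
    have : a + x ∈ ({a} : Finset ℕ) + Y := by
      rw [← h]; exact Finset.mem_add.2 ⟨a, by simp, x, hx, rfl⟩
    obtain ⟨b, hb, y, hy, hxy⟩ := Finset.mem_add.1 this
    rw [Finset.mem_singleton] at hb
    subst hb
    have : y = x := by omega
    rwa [← this]
  · intro hx
    have : a + x ∈ ({a} : Finset ℕ) + X := by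
      rw [h]; exact Finset.mem_add.2 ⟨a, by simp, x, hx, rfl⟩
    obtain ⟨b, hb, y, hy, hxy⟩ := Finset.mem_add.1 this
    rw [Finset.mem_singleton] at hb
    subst hb
    have : y = x := by omega
    rwa [← this]

/-- An automorphism of `P(S)` maps singletons to singletons. -/
lemma image_singleton {S : Set ℕ} (hcl : ∀ a ∈ S, ∀ b ∈ S, a + b ∈ S)
    {f : Finset ℕ → Finset ℕ} (hf : IsPowerAut S f) {a : ℕ} (ha : a ∈ S) :
    ∃ t ∈ S, f ({a} : Finset ℕ) = {t} := by
  obtain ⟨hmaps, hinj, hsurj, hadd⟩ := hf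
  have haPS : ({a} : Finset ℕ) ∈ PS S := singleton_mem_PS ha
  have hB : f {a} ∈ PS S := hmaps _ haPS
  set B := f ({a} : Finset ℕ) with hBdef
  by_cases htwo : ∃ b₀ ∈ B, ∃ b₁ ∈ B, b₀ ≠ b₁
  · exfalso
    obtain ⟨b₀, h0, b₁, h1, hne⟩ := htwo
    have hBPS : B ∈ PS S := hB
    have hY2 : B + B ∈ PS S := add_mem_PS hcl hBPS hBPS
    have hY1mem : b₀ + b₀ ∈ (B + B).erase (b₀ + b₁) :=
      Finset.mem_erase.2 ⟨by omega, Finset.mem_add.2 ⟨b₀, h0, b₀, h0, rfl⟩⟩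
    have hY1 : (B + B).erase (b₀ + b₁) ∈ PS S := by
      refine ⟨⟨b₀ + b₀, hY1mem⟩, ?_⟩
      intro x hx
      exact hY2.2 (Finset.erase_subset _ _ hx)
    obtain ⟨X₁, hX₁, hfX₁⟩ := hsurj _ hY1
    obtain ⟨X₂, hX₂, hfX₂⟩ := hsurj _ hY2
    have h1' : f ({a} + X₁) = B + (B + B).erase (b₀ + b₁) := by
      rw [hadd _ haPS _ hX₁, ← hBdef, hfX₁]
    have h2' : f ({a} + X₂) = B + (B + B) := by
      rw [hadd _ haPS _ hX₂, ← hBdef, hfX₂]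
    have heq : f ({a} + X₁) = f ({a} + X₂) := by
      rw [h1', h2', erase_add B h0 h1 hne]
    have hXeq : ({a} : Finset ℕ) + X₁ = {a} + X₂ :=
      hinj _ (add_mem_PS hcl haPS hX₁) _ (add_mem_PS hcl haPS hX₂) heq
    have : X₁ = X₂ := singleton_add_cancel hXeq
    subst this
    rw [hfX₁] at hfX₂
    have : b₀ + b₁ ∈ (B + B).erase (b₀ + b₁) := by
      rw [hfX₂]; exact Finset.mem_add.2 ⟨b₀, h0, b₁, h1, rfl⟩
    exact (Finset.mem_erase.1 this).1 rfl
  · push_neg at htwo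
    obtain ⟨t, ht⟩ := hB.1
    refine ⟨t, hB.2 ht, ?_⟩
    apply Finset.eq_singleton_iff_unique_mem.2 ⟨ht, ?_⟩
    intro x hx
    exact htwo x hx t ht

/-- The function on elements induced by an automorphism. -/
noncomputable def elemMap (f : Finset ℕ → Finset ℕ) (a : ℕ) : ℕ :=
  (WithBot.unbotD 0 (f ({a} : Finset ℕ)).min)

lemma elemMap_spec {S : Set ℕ} (hcl : ∀ a ∈ S, ∀ b ∈ S, a + b ∈ S)
    {f : Finset ℕ → Finset ℕ} (hf : IsPowerAut S f) {a : ℕ} (ha : a ∈ S) :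
    f ({a} : Finset ℕ) = {elemMap f a} ∧ elemMap f a ∈ S := by
  obtain ⟨t, htS, hft⟩ := image_singleton hcl hf ha
  have : elemMap f a = t := by
    rw [elemMap, hft, Finset.min_singleton]
    rfl
  rw [this, hft]
  exact ⟨rfl, htS⟩

section ElemMap

variable {S : Set ℕ} {f : Finset ℕ → Finset ℕ}

lemma elemMap_add (hcl : ∀ a ∈ S, ∀ b ∈ S, a + b ∈ S) (hf : IsPowerAut S f) {a b : ℕ} (ha : a ∈ S) (hb : b ∈ S) :
    elemMap f (a + b) = elemMap f a + elemMap f b := by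
  have h1 := (elemMap_spec hcl hf ha).1
  have h2 := (elemMap_spec hcl hf hb).1
  have h3 := (elemMap_spec hcl hf (hcl a ha b hb)).1
  have hadd := hf.2.2.2 _ (singleton_mem_PS ha) _ (singleton_mem_PS hb)
  have : ({a} : Finset ℕ) + {b} = {a + b} := by simp
  rw [this] at hadd
  rw [h3, h1, h2] at hadd
  have : ({elemMap f a} : Finset ℕ) + {elemMap f b} = {elemMap f a + elemMap f b} := by simp
  rw [this] at hadd
  exact Finset.singleton_injective hadd

lemma nsmul_mem (hcl : ∀ a ∈ S, ∀ b ∈ S, a + b ∈ S) {a : ℕ} (ha : a ∈ S) : ∀ n, 1 ≤ n → n * a ∈ S := by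
  intro n hn
  induction n with
  | zero => omega
  | succ m ih =>
    rcases Nat.eq_or_lt_of_le hn with h | h
    · simpa [← h] using ha
    · have hm : 1 ≤ m := by omega
      have := hcl _ (ih hm) _ ha
      simpa [Nat.succ_mul] using this

lemma elemMap_nsmul (hcl : ∀ a ∈ S, ∀ b ∈ S, a + b ∈ S) (hf : IsPowerAut S f) {a : ℕ} (ha : a ∈ S) : ∀ n, 1 ≤ n → elemMap f (n * a) = n * elemMap f a := by
  intro n hn
  induction n with
  | zero => omega
  | succ m ih =>
    rcases Nat.eq_or_lt_of_le hn with h | h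
    · simp [← h]
    · have hm : 1 ≤ m := by omega
      have hma : m * a ∈ S := nsmul_mem hcl ha m hm
      have : (m + 1) * a = m * a + a := by ring
      rw [this, elemMap_add hcl hf hma ha, ih hm]
      ring

lemma elemMap_cross (hcl : ∀ a ∈ S, ∀ b ∈ S, a + b ∈ S) (hf : IsPowerAut S f) {a b : ℕ} (ha : a ∈ S) (hb : b ∈ S) (ha1 : 1 ≤ a) (hb1 : 1 ≤ b) :
    b * elemMap f a = a * elemMap f b := by
  have h1 : elemMap f (b * a) = b * elemMap f a := elemMap_nsmul hcl hf ha b hb1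
  have h2 : elemMap f (a * b) = a * elemMap f b := elemMap_nsmul hcl hf hb a ha1
  rw [← h1, ← h2, Nat.mul_comm]

end ElemMap

end Stmt16Aux

open Stmt16Aux in
/-- An automorphism of `P(S)` fixes every singleton `{r}` with `r ∈ S`. -/
theorem stmt16 (S : Set ℕ) (hS : IsNumSgp S) (k : ℕ) (hk : IsCritical S k)
    (f : Finset ℕ → Finset ℕ) (hf : IsPowerAut S f) :
    ∀ r ∈ S, f ({r} : Finset ℕ) = ({r} : Finset ℕ) := by
  obtain ⟨hcl, -⟩ := hS
  obtain ⟨hmaps, hinj, hsurj, hadd⟩ := hf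
  have hf' : IsPowerAut S f := ⟨hmaps, hinj, hsurj, hadd⟩
  classical
  -- construct the inverse automorphism g
  set g : Finset ℕ → Finset ℕ := fun Y => if h : Y ∈ PS S then (hsurj Y h).choose else Y with hgdef
  have hgmem : ∀ Y ∈ PS S, g Y ∈ PS S := by
    intro Y hY
    simp only [hgdef, dif_pos hY]
    exact (hsurj Y hY).choose_spec.1
  have hfg : ∀ Y ∈ PS S, f (g Y) = Y := by
    intro Y hY
    simp only [hgdef, dif_pos hY]
    exact (hsurj Y hY).choose_spec.2
  have hgf : ∀ X ∈ PS S, g (f X) = X := by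
    intro X hX
    have hfX : f X ∈ PS S := hmaps _ hX
    exact hinj _ (hgmem _ hfX) _ hX (hfg _ hfX)
  have hg : IsPowerAut S g := by
    refine ⟨hgmem, ?_, ?_, ?_⟩
    · intro Y hY Y' hY' h
      rw [← hfg _ hY, ← hfg _ hY', h]
    · intro X hX
      exact ⟨f X, hmaps _ hX, hgf _ hX⟩
    · intro Y hY Y' hY'
      have hYY' : Y + Y' ∈ PS S := add_mem_PS hcl hY hY'
      have h1 : f (g (Y + Y')) = Y + Y' := hfg _ hYY'
      have h2 : f (g Y + g Y') = Y + Y' := by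
        rw [hadd _ (hgmem _ hY) _ (hgmem _ hY'), hfg _ hY, hfg _ hY']
      exact hinj _ (hgmem _ hYY') _ (add_mem_PS hcl (hgmem _ hY) (hgmem _ hY')) (h1.trans h2.symm)
  -- composition of the induced element maps
  have h₂h₁ : ∀ a ∈ S, elemMap g (elemMap f a) = a := by
    intro a ha
    have hs1 := elemMap_spec hcl hf' ha
    have hs2 := elemMap_spec hcl hg hs1.2
    have hcomp : g (f ({a} : Finset ℕ)) = {a} := hgf _ (singleton_mem_PS ha)
    rw [hs1.1, hs2.1] at hcomp
    exact Finset.singleton_injective hcomp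
  -- the distinguished element κ = k + 1
  have hκS : k + 1 ∈ S := hk.1 _ (by omega)
  have hκ1S : (k + 1) + 1 ∈ S := hk.1 _ (by omega)
  -- κ divides elemMap F κ for any automorphism F
  have hdvd : ∀ (F : Finset ℕ → Finset ℕ), IsPowerAut S F → (k + 1) ∣ elemMap F (k + 1) := by
    intro F hF
    have hcr := elemMap_cross hcl hF hκS hκ1S (by omega) (by omega)
    -- (κ+1) * elemMap F κ = κ * elemMap F (κ+1)
    have hdvd' : (k + 1) ∣ ((k + 1) + 1) * elemMap F (k + 1) := ⟨elemMap F ((k + 1) + 1), hcr⟩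
    exact ((Nat.coprime_self_add_right.mpr (Nat.coprime_one_right (k + 1))).dvd_mul_left).mp hdvd'
  obtain ⟨u, hu⟩ := hdvd f hf'
  obtain ⟨u', hu'⟩ := hdvd g hg
  -- elemMap f (k+1) is positive
  have hzero0 : (0 : ℕ) ∈ S → elemMap f 0 = 0 := by
    intro h0S
    have := elemMap_add hcl hf' h0S h0S
    simpa using this
  have hκpos : 0 < elemMap f (k + 1) := by
    rcases Nat.eq_zero_or_pos (elemMap f (k + 1)) with h | h
    · exfalso
      have h0S : (0 : ℕ) ∈ S := by
        have := (elemMap_spec hcl hf' hκS).2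
        rwa [h] at this
      have heq : f ({k + 1} : Finset ℕ) = f ({0} : Finset ℕ) := by
        rw [(elemMap_spec hcl hf' hκS).1, (elemMap_spec hcl hf' h0S).1, hzero0 h0S, h]
      have := hinj _ (singleton_mem_PS hκS) _ (singleton_mem_PS h0S) heq
      have : k + 1 = 0 := Finset.singleton_injective this
      omega
    · exact h
  have hupos : 1 ≤ u := by
    rcases Nat.eq_zero_or_pos u with h | h
    · rw [h, Nat.mul_zero] at hu; omega
    · exact h
  -- u * u' = 1, hence u = 1
  have huv : u * u' = 1 := by
    have h1 : elemMap g (elemMap f (k + 1)) = k + 1 := h₂h₁ _ hκS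
    have h2 : elemMap g (u * (k + 1)) = u * elemMap g (k + 1) :=
      elemMap_nsmul hcl hg hκS u hupos
    rw [hu, Nat.mul_comm (k + 1) u, h2, hu'] at h1
    have h4 : (u * u') * (k + 1) = 1 * (k + 1) := by
      have h3 : (u * u') * (k + 1) = u * ((k + 1) * u') := by ring
      rw [h3, h1, one_mul]
    exact Nat.eq_of_mul_eq_mul_right (by omega) h4
  have hu1 : u = 1 := Nat.dvd_one.mp ⟨u', huv.symm⟩
  have hκfix : elemMap f (k + 1) = k + 1 := by
    rw [hu, hu1]; ring
  -- conclusion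
  intro r hr
  rcases Nat.eq_zero_or_pos r with hr0 | hr1
  · subst hr0
    rw [(elemMap_spec hcl hf' hr).1, hzero0 hr]
  · have hcr := elemMap_cross hcl hf' hr hκS hr1 (by omega)
    -- (k+1) * elemMap f r = r * elemMap f (k+1)
    rw [hκfix] at hcr
    have hr' : elemMap f r = r := by
      have h2 : (k + 1) * elemMap f r = (k + 1) * r := by rw [hcr]; ring
      exact Nat.eq_of_mul_eq_mul_left (by omega) h2
    rw [(elemMap_spec hcl hf' hr).1, hr']
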